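/- Let t ≥ 1, λ > 0, and let s₁, …, s_t be real numbers with 0 ≤ sᵢ ≤ 1 for all i. Then Σ_{i=1}^{t} sᵢ ≤ √( (2λ + 1) · t · (1/2) Σ_{i=1}^{t} ln(1 + sᵢ²/λ) ). -/

import Mathlib

lemma aux_hasDeriv (y : ℝ) (h1 : (0:ℝ) < 1 + y) (h2 : (0:ℝ) < y + 2) :
    HasDerivAt (fun y : ℝ => Real.log (1 + y) - 2 * y / (y + 2))
      (1 / (1 + y) - 4 / (y + 2) ^ 2) y := by
  have hlog : HasDerivAt (fun y : ℝ => Real.log (1 + y)) (1 / (1 + y)) y := by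
    simpa using ((hasDerivAt_id y).const_add (1:ℝ)).log (ne_of_gt h1)
  have hdiv : HasDerivAt (fun y : ℝ => 2 * y / (y + 2)) (4 / (y + 2) ^ 2) y := by
    have h := ((hasDerivAt_id y).const_mul (2:ℝ)).div
      ((hasDerivAt_id y).add_const (2:ℝ)) (ne_of_gt h2)
    refine h.congr_deriv ?_
    show (2 * 1 * (y + 2) - 2 * y * 1) / (y + 2) ^ 2 = 4 / (y + 2) ^ 2
    ring
  exact hlog.sub hdiv

lemma aux_log_ge (x : ℝ) (hx : 0 ≤ x) : 2 * x / (x + 2) ≤ Real.log (1 + x) := by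
  set g : ℝ → ℝ := fun y => Real.log (1 + y) - 2 * y / (y + 2) with hg
  have hmono : MonotoneOn g (Set.Ici (0:ℝ)) := by
    apply monotoneOn_of_deriv_nonneg (convex_Ici 0)
    · apply ContinuousOn.sub
      · apply ContinuousOn.log (by fun_prop)
        intro y hy; simp at hy; linarith
      · apply ContinuousOn.div (by fun_prop) (by fun_prop)
        intro y hy; simp at hy; intro h; linarith
    · intro y hy
      rw [interior_Ici] at hy
      simp only [Set.mem_Ioi] at hy
      exact (aux_hasDeriv y (by linarith) (by linarith)).differentiableAt.differentiableWithinAt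
    · intro y hy
      rw [interior_Ici] at hy
      simp only [Set.mem_Ioi] at hy
      have h1 : (0:ℝ) < 1 + y := by linarith
      have h2 : (0:ℝ) < y + 2 := by linarith
      rw [(aux_hasDeriv y h1 h2).deriv]
      rw [sub_nonneg, div_le_div_iff₀ (by positivity) h1]
      nlinarith [sq_nonneg y]
  have h0 : g 0 = 0 := by simp [hg]
  have := hmono (Set.self_mem_Ici) (Set.mem_Ici.mpr hx) hx
  rw [h0] at this
  simpa [hg, sub_nonneg] using this

theorem stmt_9 (t : ℕ) (ht : 1 ≤ t) (lam : ℝ) (hlam : 0 < lam)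
    (s : Fin t → ℝ) (hs0 : ∀ i, 0 ≤ s i) (hs1 : ∀ i, s i ≤ 1) :
    ∑ i, s i ≤
      Real.sqrt ((2 * lam + 1) * t * (1 / 2 * ∑ i, Real.log (1 + s i ^ 2 / lam))) := by
  have hkey : ∀ i, s i ^ 2 ≤ (2 * lam + 1) / 2 * Real.log (1 + s i ^ 2 / lam) := by
    intro i
    set u := s i ^ 2 with hu
    have hu0 : 0 ≤ u := sq_nonneg _
    have hu1 : u ≤ 1 := by
      have := hs1 i; have := hs0 i; nlinarith
    have h1 := aux_log_ge (u / lam) (by positivity)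
    have h2 : 2 * (u / lam) / (u / lam + 2) = 2 * u / (u + 2 * lam) := by
      rw [div_eq_div_iff (by positivity) (by positivity)]
      field_simp
    rw [h2] at h1
    have hpos : (0:ℝ) < u + 2 * lam := by linarith
    have h3 : u ≤ (2 * lam + 1) / 2 * (2 * u / (u + 2 * lam)) := by
      have heq : (2 * lam + 1) / 2 * (2 * u / (u + 2 * lam))
          = (2 * lam + 1) * u / (u + 2 * lam) := by
        field_simp
      rw [heq, le_div_iff₀ hpos]
      nlinarith
    calc u ≤ (2 * lam + 1) / 2 * (2 * u / (u + 2 * lam)) := h3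
      _ ≤ (2 * lam + 1) / 2 * Real.log (1 + u / lam) :=
        mul_le_mul_of_nonneg_left h1 (by positivity)
  have hsum0 : 0 ≤ ∑ i, s i := Finset.sum_nonneg fun i _ => hs0 i
  have hlognn : ∀ i : Fin t, 0 ≤ Real.log (1 + s i ^ 2 / lam) := fun i =>
    Real.log_nonneg (by nlinarith [sq_nonneg (s i), div_nonneg (sq_nonneg (s i)) hlam.le])
  have hsumlog : 0 ≤ ∑ i, Real.log (1 + s i ^ 2 / lam) :=
    Finset.sum_nonneg fun i _ => hlognn i
  rw [Real.le_sqrt hsum0]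
  have hcs : (∑ i, s i) ^ 2 ≤ (t : ℝ) * ∑ i, s i ^ 2 := by
    have := sq_sum_le_card_mul_sum_sq (s := (Finset.univ : Finset (Fin t))) (f := s)
    simpa using this
  calc (∑ i, s i) ^ 2 ≤ (t : ℝ) * ∑ i, s i ^ 2 := hcs
    _ ≤ (t : ℝ) * ∑ i, (2 * lam + 1) / 2 * Real.log (1 + s i ^ 2 / lam) := by
        apply mul_le_mul_of_nonneg_left _ (by positivity)
        exact Finset.sum_le_sum fun i _ => hkey i
    _ = (2 * lam + 1) * t * (1 / 2 * ∑ i, Real.log (1 + s i ^ 2 / lam)) := by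
        rw [← Finset.mul_sum]; ring
  exact mul_nonneg (by positivity) (by linarith)
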